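/- Let A be a commutative ring, L a unit of A, n ≥ 1 and d ≥ 1 integers, a : Fin n → ℤ and b : Fin n → ℕ with b(i) ≥ 1 for all i. For each i set e(i) = lcm(b(i), d)/b(i), and let S be the (finite) set of tuples u : Fin n → ℕ with 1 ≤ u(i) ≤ e(i) for all i and d ∣ Σᵢ u(i)·b(i). Then in A[[T]]: ( ∏ᵢ T^{b(i)} · (T^{b(i)} − L^{a(i)})^{−1} )[d] = ( Σ_{u ∈ S} L^{−Σᵢ a(i)u(i)} · T^{Σᵢ u(i)b(i)} ) · ∏ᵢ L^{a(i)e(i)} · (T^{b(i)e(i)} − L^{a(i)e(i)})^{−1}, where [d] denotes the truncation keeping only coefficients in degrees divisible by d. -/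

import Mathlib

open PowerSeries

/-- The truncation `x ↦ x[d]` keeping only the coefficients in degrees divisible by `d`. -/
noncomputable def truncDiv (A : Type*) [CommRing A] (d : ℕ) (x : PowerSeries A) :
    PowerSeries A :=
  PowerSeries.mk fun i => if d ∣ i then PowerSeries.coeff i x else 0

namespace Stmt8Aux

variable {A : Type*} [CommRing A]

/-- Explicit inverse of `X^m - C c` for a unit `c`. -/
noncomputable def geomInv (c : Aˣ) (m : ℕ) : PowerSeries A :=
  PowerSeries.mk fun j => if m ∣ j then -(((c⁻¹ : Aˣ) : A)) ^ (j / m + 1) else 0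

lemma sub_mul_geomInv (c : Aˣ) (m : ℕ) (hm : 1 ≤ m) :
    ((X : PowerSeries A) ^ m - C (c : A)) * geomInv c m = 1 := by
  have hx : (c : A) * ((c⁻¹ : Aˣ) : A) = 1 := by
    rw [← Units.val_mul, mul_inv_cancel, Units.val_one]
  ext j
  rw [sub_mul, map_sub, coeff_X_pow_mul', coeff_C_mul, coeff_one]
  simp only [geomInv, coeff_mk]
  rcases eq_or_ne j 0 with rfl | hj
  · have h0 : ¬ m ≤ 0 := by omega
    rw [if_neg h0, if_pos (dvd_zero m), if_pos rfl]
    simp [hx]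
  · by_cases hmj : m ∣ j
    · have hmle : m ≤ j := Nat.le_of_dvd (Nat.pos_of_ne_zero hj) hmj
      have h1 : m ∣ j - m := Nat.dvd_sub hmj dvd_rfl
      have h2 : (j - m) / m + 1 = j / m := by
        obtain ⟨k, rfl⟩ := hmj
        have hk : 1 ≤ k := by
          rcases Nat.eq_zero_or_pos k with rfl | h
          · simp at hj
          · exact h
        have hmpos : 0 < m := hm
        rw [show m * k - m = m * (k - 1) by
          rw [Nat.mul_sub, mul_one], Nat.mul_div_cancel_left _ hmpos,
          Nat.mul_div_cancel_left _ hmpos]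
        omega
      rw [if_pos hmle, if_pos h1, if_pos hmj, if_neg hj, h2]
      set x : A := ((c⁻¹ : Aˣ) : A)
      have : (c : A) * (-x ^ (j / m + 1)) = -x ^ (j / m) := by
        rw [pow_succ', mul_neg, ← mul_assoc, hx, one_mul]
      rw [this]
      ring
    · rw [if_neg hmj, if_neg hj, mul_zero, sub_zero]
      by_cases hmle : m ≤ j
      · have h1 : ¬ m ∣ (j - m) := by
          intro h
          apply hmj
          have := Nat.dvd_add h (dvd_refl m)
          rwa [Nat.sub_add_cancel hmle] at this
        rw [if_pos hmle, if_neg h1]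
      · rw [if_neg hmle]

lemma isUnit_sub (c : Aˣ) (m : ℕ) (hm : 1 ≤ m) :
    IsUnit ((X : PowerSeries A) ^ m - C (c : A)) :=
  IsUnit.of_mul_eq_one _ (sub_mul_geomInv c m hm)

lemma inverse_sub_eq (c : Aˣ) (m : ℕ) (hm : 1 ≤ m) :
    Ring.inverse ((X : PowerSeries A) ^ m - C (c : A)) = geomInv c m := by
  have hu := isUnit_sub c m hm
  have h := sub_mul_geomInv c m hm
  calc Ring.inverse ((X : PowerSeries A) ^ m - C (c : A))
      = Ring.inverse ((X : PowerSeries A) ^ m - C (c : A)) *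
        (((X : PowerSeries A) ^ m - C (c : A)) * geomInv c m) := by rw [h, mul_one]
    _ = geomInv c m := by rw [← mul_assoc, Ring.inverse_mul_cancel _ hu, one_mul]

lemma zpow_sum {G : Type*} [CommGroup G] {ι : Type*} (g : G) (s : Finset ι) (f : ι → ℤ) :
    g ^ (∑ i ∈ s, f i) = ∏ i ∈ s, g ^ f i := by
  classical
  induction s using Finset.cons_induction with
  | empty => simp
  | cons i s h ih => rw [Finset.sum_cons, Finset.prod_cons, zpow_add, ih]

/-- Key identity: `X^b (X^b - c)⁻¹ = (∑_{u=1}^e c^{-u} X^{bu}) · c^e (X^{be} - c^e)⁻¹`. -/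
lemma keyA (c : Aˣ) (b e : ℕ) (hb : 1 ≤ b) (he : 1 ≤ e) :
    (X : PowerSeries A) ^ b * Ring.inverse ((X : PowerSeries A) ^ b - C (c : A)) =
    (∑ u ∈ Finset.Icc 1 e, C (((c ^ u)⁻¹ : Aˣ) : A) * X ^ (b * u)) *
      (C ((c ^ e : Aˣ) : A) *
        Ring.inverse ((X : PowerSeries A) ^ (b * e) - C ((c ^ e : Aˣ) : A))) := by
  have hbe : 1 ≤ b * e := Nat.one_le_iff_ne_zero.2 (by positivity)
  have hu1 := isUnit_sub c b hb
  have hu2 := isUnit_sub (c ^ e) (b * e) hbe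
  set u1 : PowerSeries A := (X : PowerSeries A) ^ b - C (c : A) with hu1def
  set u2 : PowerSeries A := (X : PowerSeries A) ^ (b * e) - C ((c ^ e : Aˣ) : A) with hu2def
  set W : PowerSeries A := ∑ u ∈ Finset.Icc 1 e, C (((c ^ u)⁻¹ : Aˣ) : A) * X ^ (b * u)
    with hWdef
  have hu2' : u2 = ((X : PowerSeries A) ^ b) ^ e - (C (c : A)) ^ e := by
    rw [hu2def, pow_mul, ← map_pow, Units.val_pow_eq_pow_val]
  have hg := geom_sum₂_mul ((X : PowerSeries A) ^ b) (C (c : A)) e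
  have hsum : W * C ((c ^ e : Aˣ) : A)
      = X ^ b * (∑ i ∈ Finset.range e,
          ((X : PowerSeries A) ^ b) ^ i * (C (c : A)) ^ (e - 1 - i)) := by
    rw [hWdef, Finset.sum_mul, Finset.mul_sum]
    rw [show Finset.Icc 1 e = Finset.Ico 1 (e + 1) from (Finset.Ico_add_one_right_eq_Icc 1 e).symm,
      Finset.sum_Ico_eq_sum_range]
    simp only [Nat.add_sub_cancel]
    refine Finset.sum_congr rfl fun i hi => ?_
    rw [Finset.mem_range] at hi
    have hci : ((c ^ (1 + i))⁻¹ : Aˣ) * c ^ e = c ^ (e - 1 - i) := by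
      have h2 : c ^ e = c ^ (1 + i) * c ^ (e - 1 - i) := by
        rw [← pow_add]; congr 1; omega
      rw [h2, inv_mul_cancel_left]
    rw [mul_assoc, mul_comm ((X : PowerSeries A) ^ (b * (1 + i))), ← mul_assoc, ← map_mul,
      ← Units.val_mul, hci]
    have h1 : b * (1 + i) = b + b * i := by ring
    rw [h1, pow_add, Units.val_pow_eq_pow_val, map_pow, ← pow_mul]
    ring
  have hW : W * C ((c ^ e : Aˣ) : A) * u1 = (X : PowerSeries A) ^ b * u2 := by
    rw [hsum, hu2', mul_assoc, hu1def, hg]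
  refine (hu1.mul hu2).mul_right_cancel ?_
  calc (X : PowerSeries A) ^ b * Ring.inverse u1 * (u1 * u2)
      = (Ring.inverse u1 * u1) * ((X : PowerSeries A) ^ b * u2) := by ring
    _ = (X : PowerSeries A) ^ b * u2 := by rw [Ring.inverse_mul_cancel _ hu1, one_mul]
    _ = W * C ((c ^ e : Aˣ) : A) * u1 := hW.symm
    _ = (Ring.inverse u2 * u2) * (W * C ((c ^ e : Aˣ) : A) * u1) := by
        rw [Ring.inverse_mul_cancel _ hu2, one_mul]
    _ = W * (C ((c ^ e : Aˣ) : A) * Ring.inverse u2) * (u1 * u2) := by ring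

lemma support_mul {d : ℕ} (x y : PowerSeries A)
    (hx : ∀ j, ¬ d ∣ j → coeff j x = 0) (hy : ∀ j, ¬ d ∣ j → coeff j y = 0) :
    ∀ j, ¬ d ∣ j → coeff j (x * y) = 0 := by
  intro j hj
  rw [coeff_mul]
  apply Finset.sum_eq_zero
  rintro ⟨p, q⟩ hpq
  rw [Finset.HasAntidiagonal.mem_antidiagonal] at hpq
  by_cases hp : d ∣ p
  · have hq : ¬ d ∣ q := fun h => hj (hpq ▸ Nat.dvd_add hp h)
    rw [hy q hq, mul_zero]
  · rw [hx p hp, zero_mul]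

lemma support_C {d : ℕ} (α : A) : ∀ j, ¬ d ∣ j → coeff j (C α) = 0 := by
  intro j hj
  have hj0 : j ≠ 0 := by rintro rfl; exact hj (dvd_zero d)
  rw [coeff_C, if_neg hj0]

lemma support_prod {ι : Type*} {d : ℕ} (s : Finset ι) (f : ι → PowerSeries A)
    (h : ∀ i ∈ s, ∀ j, ¬ d ∣ j → coeff j (f i) = 0) :
    ∀ j, ¬ d ∣ j → coeff j (∏ i ∈ s, f i) = 0 := by
  classical
  induction s using Finset.cons_induction with
  | empty =>
      intro j hj
      have hj0 : j ≠ 0 := by rintro rfl; exact hj (dvd_zero d)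
      rw [Finset.prod_empty, coeff_one, if_neg hj0]
  | cons i s his ih =>
      rw [Finset.prod_cons]
      exact support_mul _ _ (h i (Finset.mem_cons_self i s))
        (ih fun i hi => h i (Finset.mem_cons_of_mem hi))

lemma truncDiv_sum {ι : Type*} (s : Finset ι) (f : ι → PowerSeries A) (d : ℕ) :
    truncDiv A d (∑ u ∈ s, f u) = ∑ u ∈ s, truncDiv A d (f u) := by
  ext j
  rw [truncDiv, coeff_mk, map_sum, map_sum]
  simp only [truncDiv, coeff_mk]
  by_cases h : d ∣ j <;> simp [h]

lemma truncDiv_term (d : ℕ) (α : A) (m : ℕ) (G : PowerSeries A)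
    (hG : ∀ j, ¬ d ∣ j → coeff j G = 0) :
    truncDiv A d (C α * X ^ m * G) = if d ∣ m then C α * X ^ m * G else 0 := by
  ext j
  rw [truncDiv, coeff_mk]
  have hc : coeff j (C α * X ^ m * G)
      = α * (if m ≤ j then coeff (j - m) G else 0) := by
    rw [mul_assoc, coeff_C_mul, coeff_X_pow_mul']
  by_cases hm : d ∣ m <;> by_cases hj : d ∣ j
  · rw [if_pos hm, if_pos hj]
  · rw [if_pos hm, if_neg hj, hc]
    by_cases hle : m ≤ j
    · have : ¬ d ∣ (j - m) := by
        intro h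
        apply hj
        have := Nat.dvd_add h hm
        rwa [Nat.sub_add_cancel hle] at this
      rw [if_pos hle, hG _ this, mul_zero]
    · rw [if_neg hle, mul_zero]
  · rw [if_neg hm, if_pos hj, hc, map_zero]
    by_cases hle : m ≤ j
    · have : ¬ d ∣ (j - m) := by
        intro h
        apply hm
        have := Nat.dvd_sub hj h
        rwa [Nat.sub_sub_self hle] at this
      rw [if_pos hle, hG _ this, mul_zero]
    · rw [if_neg hle, mul_zero]
  · rw [if_neg hm, if_neg hj, map_zero]

end Stmt8Aux

open Stmt8Aux Finset in
/-- the computation of `C_{a,b} = (∏ᵢ T^{bᵢ}(T^{bᵢ} - L^{aᵢ})⁻¹)[d]`: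
with `eᵢ = lcm(bᵢ, d)/bᵢ` and `S` the set of tuples `u` with `1 ≤ uᵢ ≤ eᵢ` and
`d ∣ ∑ uᵢbᵢ`, one has
`C_{a,b} = (∑_{u ∈ S} L^{-a·u} T^{b·u}) · ∏ᵢ L^{aᵢeᵢ} (T^{bᵢeᵢ} - L^{aᵢeᵢ})⁻¹`. -/
theorem stmt8 {A : Type*} [CommRing A] (L : Aˣ) (n d : ℕ) (hn : 1 ≤ n) (hd : 1 ≤ d)
    (a : Fin n → ℤ) (b : Fin n → ℕ) (hb : ∀ i, 1 ≤ b i)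
    (e : Fin n → ℕ) (he : ∀ i, e i = Nat.lcm (b i) d / b i) :
    truncDiv A d
      (∏ i, (PowerSeries.X : PowerSeries A) ^ (b i) *
        Ring.inverse ((PowerSeries.X : PowerSeries A) ^ (b i) -
          PowerSeries.C ((L ^ (a i) : Aˣ) : A))) =
    (∑ u ∈ (Fintype.piFinset fun i => Finset.Icc 1 (e i)).filter
        (fun u => d ∣ ∑ i, u i * b i),
      PowerSeries.C ((L ^ (-(∑ i, a i * (u i : ℤ))) : Aˣ) : A) *
        (PowerSeries.X : PowerSeries A) ^ (∑ i, u i * b i)) *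
    ∏ i, PowerSeries.C ((L ^ (a i * (e i : ℤ)) : Aˣ) : A) *
      Ring.inverse ((PowerSeries.X : PowerSeries A) ^ (b i * e i) -
        PowerSeries.C ((L ^ (a i * (e i : ℤ)) : Aˣ) : A)) := by
  classical
  have hbe : ∀ i, b i * e i = Nat.lcm (b i) d := fun i => by
    rw [he i, Nat.mul_div_cancel' (Nat.dvd_lcm_left _ _)]
  have hdbe : ∀ i, d ∣ b i * e i := fun i => (hbe i) ▸ Nat.dvd_lcm_right _ _
  have hepos : ∀ i, 1 ≤ e i := by
    intro i
    by_contra h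
    have he0 : e i = 0 := by omega
    have h0 := hbe i
    rw [he0, mul_zero] at h0
    exact Nat.lcm_ne_zero (by have := hb i; omega) (by omega) h0.symm
  have hbepos : ∀ i, 1 ≤ b i * e i := fun i =>
    Nat.one_le_iff_ne_zero.2 (by have := hb i; have := hepos i; positivity)
  have hpow : ∀ i, (L ^ (a i * (e i : ℤ)) : Aˣ) = (L ^ (a i)) ^ (e i) := fun i => by
    rw [zpow_mul, zpow_natCast]
  set G : PowerSeries A := ∏ i, PowerSeries.C ((L ^ (a i * (e i : ℤ)) : Aˣ) : A) *
      Ring.inverse ((PowerSeries.X : PowerSeries A) ^ (b i * e i) -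
        PowerSeries.C ((L ^ (a i * (e i : ℤ)) : Aˣ) : A)) with hGdef
  have hG : ∀ j, ¬ d ∣ j → PowerSeries.coeff j G = 0 := by
    refine support_prod _ _ fun i _ => support_mul _ _ (support_C _) ?_
    rw [hpow i, inverse_sub_eq ((L ^ (a i)) ^ (e i)) (b i * e i) (hbepos i)]
    exact fun j hj => by
      simp only [geomInv, coeff_mk]
      rw [if_neg (fun h => hj ((hdbe i).trans h))]
  have hprod : (∏ i, (PowerSeries.X : PowerSeries A) ^ (b i) *
        Ring.inverse ((PowerSeries.X : PowerSeries A) ^ (b i) -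
          PowerSeries.C ((L ^ (a i) : Aˣ) : A)))
      = (∑ u ∈ Fintype.piFinset fun i => Finset.Icc 1 (e i),
          PowerSeries.C ((L ^ (-(∑ i, a i * (u i : ℤ))) : Aˣ) : A) *
            (PowerSeries.X : PowerSeries A) ^ (∑ i, u i * b i)) * G := by
    calc (∏ i, (PowerSeries.X : PowerSeries A) ^ (b i) *
          Ring.inverse ((PowerSeries.X : PowerSeries A) ^ (b i) -
            PowerSeries.C ((L ^ (a i) : Aˣ) : A)))
        = ∏ i, (∑ u ∈ Finset.Icc 1 (e i),
              PowerSeries.C ((((L ^ (a i)) ^ u)⁻¹ : Aˣ) : A) *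
                (PowerSeries.X : PowerSeries A) ^ (b i * u)) *
            (PowerSeries.C (((L ^ (a i)) ^ (e i) : Aˣ) : A) *
              Ring.inverse ((PowerSeries.X : PowerSeries A) ^ (b i * e i) -
                PowerSeries.C (((L ^ (a i)) ^ (e i) : Aˣ) : A))) :=
          Finset.prod_congr rfl fun i _ => keyA (L ^ (a i)) (b i) (e i) (hb i) (hepos i)
      _ = (∏ i, ∑ u ∈ Finset.Icc 1 (e i),
              PowerSeries.C ((((L ^ (a i)) ^ u)⁻¹ : Aˣ) : A) *
                (PowerSeries.X : PowerSeries A) ^ (b i * u)) * G := by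
          rw [Finset.prod_mul_distrib, hGdef]
          congr 1
          exact Finset.prod_congr rfl fun i _ => by rw [hpow i]
      _ = (∑ u ∈ Fintype.piFinset fun i => Finset.Icc 1 (e i),
            ∏ i, PowerSeries.C ((((L ^ (a i)) ^ (u i))⁻¹ : Aˣ) : A) *
                (PowerSeries.X : PowerSeries A) ^ (b i * (u i))) * G := by
          rw [Finset.prod_univ_sum]
      _ = (∑ u ∈ Fintype.piFinset fun i => Finset.Icc 1 (e i),
            PowerSeries.C ((L ^ (-(∑ i, a i * (u i : ℤ))) : Aˣ) : A) *
              (PowerSeries.X : PowerSeries A) ^ (∑ i, u i * b i)) * G := by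
          congr 1
          refine Finset.sum_congr rfl fun u _ => ?_
          rw [Finset.prod_mul_distrib]
          congr 1
          · rw [← map_prod (PowerSeries.C)]
            congr 1
            rw [show ∏ i, ((((L ^ (a i)) ^ (u i))⁻¹ : Aˣ) : A)
                = ((∏ i, ((L ^ (a i)) ^ (u i))⁻¹ : Aˣ) : A) from
              (map_prod (Units.coeHom A) (fun i => ((L ^ (a i)) ^ (u i))⁻¹)
                Finset.univ).symm]
            congr 1
            rw [show (-(∑ i, a i * (u i : ℤ))) = ∑ i, -(a i * (u i : ℤ)) by
              rw [← Finset.sum_neg_distrib], zpow_sum]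
            exact Finset.prod_congr rfl fun i _ => by
              rw [zpow_neg, zpow_mul, zpow_natCast]
          · rw [Finset.prod_pow_eq_pow_sum]
            congr 1
            exact Finset.sum_congr rfl fun i _ => mul_comm _ _
  rw [hprod, Finset.sum_mul, truncDiv_sum]
  rw [Finset.sum_mul, Finset.sum_filter]
  refine Finset.sum_congr rfl fun u _ => ?_
  rw [truncDiv_term d _ _ G hG]
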